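/- Let K be a non-archimedean local field, V a finite-dimensional K-vector space, and W ⊆ V a K-subspace. Then the canonical map from the set of norms on V to the product of the sets of norms on W and on V/W, sending a norm to (its restriction to W, its quotient norm on V/W), is Lipschitz continuous: there exists a constant C > 0 such that for all norms α, β on V one has d_2(α|_W, β|_W) ≤ C·d_2(α, β) and d_2(α̅, β̅) ≤ C·d_2(α, β), where α̅, β̅ denote the quotient norms on V/W. -/

import Mathlib

/-- A (non-archimedean) norm on a vector space `V` over a normed field `K`:
a function `f : V → ℝ≥0` with `f v = 0` iff `v = 0`, `f (a • v) = |a| * f v`,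
and the ultrametric inequality `f (v + w) ≤ max (f v) (f w)`. -/
structure IsVecNorm (K : Type*) [NormedField K] (V : Type*) [AddCommGroup V] [Module K V]
    (f : V → ℝ) : Prop where
  nonneg : ∀ v, 0 ≤ f v
  eq_zero_iff : ∀ v, f v = 0 ↔ v = 0
  smul_eq : ∀ (a : K) (v : V), f (a • v) = ‖a‖ * f v
  add_le_max : ∀ v w, f (v + w) ≤ max (f v) (f w)

/-- The `i`-th term `λ_i(f, f')` of the relative spectrum of the norm `f'` with respect to
the norm `f`: the sup over subspaces `W ⊆ V` with `dim W ≥ i` of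
`inf_{w ∈ W∖{0}} log (f' w / f w)`. -/
noncomputable def relativeSpectrum (K : Type*) [NormedField K] (V : Type*) [AddCommGroup V]
    [Module K V] (f f' : V → ℝ) (i : ℕ) : ℝ :=
  ⨆ W : {W : Submodule K V // i ≤ Module.finrank K W},
    ⨅ w : {w : V // w ∈ W.1 ∧ w ≠ 0}, Real.log (f' w.1 / f w.1)

/-- The Bruhat–Tits distance between two norms on a finite-dimensional vector space:
`d₂(f, f') = (∑_{i=1}^N λ_i(f, f')²)^{1/2}` where `N = dim V`. -/
noncomputable def btDist (K : Type*) [NormedField K] (V : Type*) [AddCommGroup V]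
    [Module K V] (f f' : V → ℝ) : ℝ :=
  Real.sqrt (∑ i ∈ Finset.Icc 1 (Module.finrank K V), (relativeSpectrum K V f f' i) ^ 2)

/-- The quotient norm on `V ⧸ W` induced by a norm `f` on `V`:
`‖x + W‖ = inf_{y ∈ x + W} f y`. -/
noncomputable def quotientNorm (K : Type*) [NormedField K] {V : Type*} [AddCommGroup V]
    [Module K V] (W : Submodule K V) (f : V → ℝ) (x : V ⧸ W) : ℝ :=
  ⨅ y : {y : V // (Submodule.Quotient.mk y : V ⧸ W) = x}, f y.1

/-! ### Auxiliary material -/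

/-- A copy of `V`, used to endow `V` with the normed-space structure coming from a
vector-space norm `f`. -/
def NormCopy (V : Type*) (_f : V → ℝ) : Type _ := V

instance NormCopy.instAddCommGroup {V : Type*} [AddCommGroup V] (f : V → ℝ) :
    AddCommGroup (NormCopy V f) := ‹AddCommGroup V›

instance NormCopy.instModule {K V : Type*} [NormedField K] [AddCommGroup V] [Module K V]
    (f : V → ℝ) : Module K (NormCopy V f) := ‹Module K V›

/-- The normed group structure on `NormCopy V f` coming from a vector-space norm `f`. -/
@[reducible]
noncomputable def IsVecNorm.nacg {K V : Type*} [NormedField K] [AddCommGroup V] [Module K V]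
    {f : V → ℝ} (hf : IsVecNorm K V f) : NormedAddCommGroup (NormCopy V f) :=
  AddGroupNorm.toNormedAddCommGroup
    { toFun := fun v => f v
      map_zero' := (hf.eq_zero_iff 0).mpr rfl
      add_le' := fun v w => (hf.add_le_max v w).trans
        (max_le (le_add_of_nonneg_right (hf.nonneg w)) (le_add_of_nonneg_left (hf.nonneg v)))
      neg' := fun v => by
        have := hf.smul_eq (-1 : K) v
        rw [norm_neg, norm_one, one_mul] at this
        exact (congrArg f (neg_one_smul K (v : V))).symm.trans this
      eq_zero_of_map_eq_zero' := fun v h => (hf.eq_zero_iff v).mp h }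

/-- Any two vector-space norms on a finite-dimensional space over a complete nontrivially
normed field are comparable. -/
theorem IsVecNorm.crude_bound {K V : Type*} [NontriviallyNormedField K] [CompleteSpace K]
    [AddCommGroup V] [Module K V] [FiniteDimensional K V]
    {α β : V → ℝ} (hα : IsVecNorm K V α) (hβ : IsVecNorm K V β) :
    ∃ C : ℝ, 0 < C ∧ ∀ v, β v ≤ C * α v := by
  letI := hα.nacg
  letI := hβ.nacg
  letI : NormedSpace K (NormCopy V α) := ⟨fun a v => le_of_eq (hα.smul_eq a v)⟩
  letI : NormedSpace K (NormCopy V β) := ⟨fun a v => le_of_eq (hβ.smul_eq a v)⟩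
  letI : FiniteDimensional K (NormCopy V α) := ‹FiniteDimensional K V›
  let L : NormCopy V α →ₗ[K] NormCopy V β :=
    { toFun := fun v => v, map_add' := fun _ _ => rfl, map_smul' := fun _ _ => rfl }
  have hc : Continuous L := L.continuous_of_finiteDimensional
  obtain ⟨C, hC, hbd⟩ := SemilinearMapClass.bound_of_continuous L hc
  exact ⟨C, hC, fun v => hbd v⟩

theorem quotientNorm_nonneg {K V : Type*} [NormedField K]
    [AddCommGroup V] [Module K V] (W : Submodule K V)
    {f : V → ℝ} (hf : IsVecNorm K V f) (x : V ⧸ W) :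
    0 ≤ quotientNorm K W f x := by
  obtain ⟨y0, hy0⟩ := Submodule.Quotient.mk_surjective W x
  haveI : Nonempty {y : V // (Submodule.Quotient.mk y : V ⧸ W) = x} := ⟨⟨y0, hy0⟩⟩
  exact le_ciInf fun y => hf.nonneg y.1

theorem quotientNorm_pos {K V : Type*} [NontriviallyNormedField K] [CompleteSpace K]
    [AddCommGroup V] [Module K V] (W : Submodule K V) [FiniteDimensional K ↥W]
    {f : V → ℝ} (hf : IsVecNorm K V f) {x : V ⧸ W} (hx : x ≠ 0) :
    0 < quotientNorm K W f x := by
  rcases (quotientNorm_nonneg W hf x).lt_or_eq with h | h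
  · exact h
  exfalso
  obtain ⟨y0, hy0⟩ := Submodule.Quotient.mk_surjective W x
  have hy0W : y0 ∉ W := fun hmem => hx (by rw [← hy0, Submodule.Quotient.mk_eq_zero]; exact hmem)
  letI := hf.nacg
  letI : NormedSpace K (NormCopy V f) := ⟨fun a v => le_of_eq (hf.smul_eq a v)⟩
  let W' : Submodule K (NormCopy V f) := W
  haveI : FiniteDimensional K W' := ‹FiniteDimensional K ↥W›
  have hclosed : IsClosed (W' : Set (NormCopy V f)) := Submodule.closed_of_finiteDimensional W'
  haveI : Nonempty {y : V // (Submodule.Quotient.mk y : V ⧸ W) = x} := ⟨⟨y0, hy0⟩⟩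
  let z : NormCopy V f := y0
  have hy0mem : z ∈ closure (W' : Set (NormCopy V f)) := by
    rw [Metric.mem_closure_iff]
    intro ε hε
    have hlt : (⨅ y : {y : V // (Submodule.Quotient.mk y : V ⧸ W) = x}, f y.1) < ε := by
      have : quotientNorm K W f x < ε := by rw [← h]; exact hε
      exact this
    obtain ⟨y, hy⟩ := exists_lt_of_ciInf_lt hlt
    let y2 : NormCopy V f := y.1
    refine ⟨z - y2, (Submodule.Quotient.eq W).mp (hy0.trans y.2.symm), ?_⟩
    have hd : dist z (z - y2) = f (y0 - (y0 - y.1)) := by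
      rw [dist_eq_norm]; rfl
    rw [hd, sub_sub_cancel]
    exact hy
  rw [hclosed.closure_eq] at hy0mem
  exact hy0W hy0mem

/-- If the logarithmic ratios of a pair of norms on `U` all lie between the extreme terms
of the relative spectrum on `V`, then the Bruhat–Tits distance on `U` is controlled by the
one on `V`. -/
theorem btDist_le_of_range {K : Type*} [NormedField K] {V U : Type*}
    [AddCommGroup V] [Module K V] [AddCommGroup U] [Module K U]
    (α β : V → ℝ) (g g' : U → ℝ)
    (hle : Module.finrank K U ≤ Module.finrank K V)
    (hn1 : 0 < Module.finrank K U → 1 ≤ Module.finrank K V)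
    (hbound : ∀ u : U, u ≠ 0 →
      relativeSpectrum K V α β (Module.finrank K V) ≤ Real.log (g' u / g u) ∧
      Real.log (g' u / g u) ≤ relativeSpectrum K V α β 1) :
    btDist K U g g' ≤ (Real.sqrt (Module.finrank K V) + 1) * btDist K V α β := by
  set n := Module.finrank K V with hn
  set m := Module.finrank K U with hm
  set Λ := relativeSpectrum K V α β 1 with hΛdef
  set μ := relativeSpectrum K V α β n with hμdef
  set S := ∑ j ∈ Finset.Icc 1 n, (relativeSpectrum K V α β j) ^ 2 with hSdef
  have hS0 : 0 ≤ S := Finset.sum_nonneg fun j _ => sq_nonneg _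
  rcases Nat.eq_zero_or_pos m with hm0 | hm0
  · have : btDist K U g g' = 0 := by
      rw [btDist, ← hm, hm0]
      simp
    rw [this, btDist]
    positivity
  have hn1' : 1 ≤ n := hn1 hm0
  have hex : ∀ (W' : Submodule K U), 1 ≤ Module.finrank K W' → ∃ u ∈ W', u ≠ 0 := by
    intro W' hW'
    by_contra hcon
    push_neg at hcon
    have : W' = ⊥ := by
      rw [Submodule.eq_bot_iff]
      exact hcon
    rw [this, finrank_bot] at hW'
    omega
  have key : ∀ i, 1 ≤ i → i ≤ m →
      μ ≤ relativeSpectrum K U g g' i ∧ relativeSpectrum K U g g' i ≤ Λ := by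
    intro i hi1 him
    haveI hNE : Nonempty {W' : Submodule K U // i ≤ Module.finrank K W'} :=
      ⟨⟨⊤, by rw [finrank_top]; exact him⟩⟩
    have hIle : ∀ W' : {W' : Submodule K U // i ≤ Module.finrank K W'},
        (⨅ w : {w : U // w ∈ W'.1 ∧ w ≠ 0}, Real.log (g' w.1 / g w.1)) ≤ Λ := by
      rintro ⟨W', hW'⟩
      obtain ⟨u0, hu0W, hu0⟩ := hex W' (le_trans hi1 hW')
      have hbdd : BddBelow (Set.range fun w : {w : U // w ∈ W' ∧ w ≠ 0} =>
          Real.log (g' w.1 / g w.1)) := by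
        refine ⟨μ, ?_⟩
        rintro _ ⟨w, rfl⟩
        exact (hbound w.1 w.2.2).1
      exact le_trans (ciInf_le hbdd ⟨u0, hu0W, hu0⟩) (hbound u0 hu0).2
    constructor
    · have hbddA : BddAbove (Set.range fun W' : {W' : Submodule K U // i ≤ Module.finrank K W'} =>
          ⨅ w : {w : U // w ∈ W'.1 ∧ w ≠ 0}, Real.log (g' w.1 / g w.1)) := by
        refine ⟨Λ, ?_⟩
        rintro _ ⟨W', rfl⟩
        exact hIle W'
      have htop := le_ciSup hbddA ⟨⊤, by rw [finrank_top]; exact him⟩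
      refine le_trans ?_ htop
      obtain ⟨u0, -, hu0⟩ := hex ⊤ (by rw [finrank_top]; exact le_trans hi1 him)
      haveI : Nonempty {w : U // w ∈ (⊤ : Submodule K U) ∧ w ≠ 0} :=
        ⟨⟨u0, Submodule.mem_top, hu0⟩⟩
      exact le_ciInf fun w => (hbound w.1 w.2.2).1
    · exact ciSup_le hIle
  have key2 : ∀ i ∈ Finset.Icc 1 m, (relativeSpectrum K U g g' i) ^ 2 ≤ S := by
    intro i hi
    rw [Finset.mem_Icc] at hi
    obtain ⟨hμi, hiΛ⟩ := key i hi.1 hi.2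
    have hΛS : Λ ^ 2 ≤ S :=
      Finset.single_le_sum (f := fun j => (relativeSpectrum K V α β j) ^ 2)
        (fun j _ => sq_nonneg _) (Finset.mem_Icc.mpr ⟨le_refl 1, hn1'⟩)
    have hμS : μ ^ 2 ≤ S :=
      Finset.single_le_sum (f := fun j => (relativeSpectrum K V α β j) ^ 2)
        (fun j _ => sq_nonneg _) (Finset.mem_Icc.mpr ⟨hn1', le_refl n⟩)
    rcases le_total 0 (relativeSpectrum K U g g' i) with h | h
    · exact le_trans (pow_le_pow_left₀ h hiΛ 2) hΛS
    · have : (relativeSpectrum K U g g' i) ^ 2 ≤ μ ^ 2 := by nlinarith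
      exact le_trans this hμS
  calc btDist K U g g' = Real.sqrt (∑ i ∈ Finset.Icc 1 m, (relativeSpectrum K U g g' i) ^ 2) := by
        rw [btDist, ← hm]
    _ ≤ Real.sqrt (∑ _i ∈ Finset.Icc 1 m, S) :=
        Real.sqrt_le_sqrt (Finset.sum_le_sum key2)
    _ = Real.sqrt ((m : ℝ) * S) := by
        rw [Finset.sum_const, Nat.card_Icc, nsmul_eq_mul]
        norm_num
    _ ≤ Real.sqrt ((n : ℝ) * S) := by
        apply Real.sqrt_le_sqrt
        exact mul_le_mul_of_nonneg_right (by exact_mod_cast hle) hS0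
    _ = Real.sqrt n * Real.sqrt S := Real.sqrt_mul (Nat.cast_nonneg n) S
    _ ≤ (Real.sqrt n + 1) * Real.sqrt S := by
        have := Real.sqrt_nonneg S
        nlinarith
    _ = (Real.sqrt n + 1) * btDist K V α β := by rw [btDist, ← hn, ← hSdef]

/-- Let `K` be a non-archimedean local field, `V` a finite-dimensional
`K`-vector space and `W ⊆ V` a subspace. The map sending a norm on `V` to (its restriction
to `W`, its quotient norm on `V ⧸ W`) is Lipschitz continuous for the Bruhat–Tits
distances. -/
theorem restriction_quotient_lipschitz
    (K : Type*) [NontriviallyNormedField K] [IsUltrametricDist K] [LocallyCompactSpace K]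
    (V : Type*) [AddCommGroup V] [Module K V] [FiniteDimensional K V]
    (W : Submodule K V) :
    ∃ C : ℝ, 0 < C ∧ ∀ (α β : V → ℝ), IsVecNorm K V α → IsVecNorm K V β →
      btDist K ↥W (fun w => α (w : V)) (fun w => β (w : V)) ≤ C * btDist K V α β ∧
      btDist K (V ⧸ W) (quotientNorm K W α) (quotientNorm K W β) ≤ C * btDist K V α β := by
  haveI : ProperSpace K :=
    ProperSpace.of_nontriviallyNormedField_of_weaklyLocallyCompactSpace K
  refine ⟨Real.sqrt (Module.finrank K V) + 1, by positivity, ?_⟩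
  intro α β hα hβ
  obtain ⟨C1, hC1, hC1b⟩ := hα.crude_bound hβ
  obtain ⟨C2, hC2, hC2b⟩ := hβ.crude_bound hα
  have hαpos : ∀ v : V, v ≠ 0 → 0 < α v := fun v hv =>
    lt_of_le_of_ne (hα.nonneg v) (Ne.symm fun h => hv ((hα.eq_zero_iff v).mp h))
  have hβpos : ∀ v : V, v ≠ 0 → 0 < β v := fun v hv =>
    lt_of_le_of_ne (hβ.nonneg v) (Ne.symm fun h => hv ((hβ.eq_zero_iff v).mp h))
  set L0 : ℝ := Real.log (1 / C2) with hL0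
  set U0 : ℝ := Real.log C1 with hU0
  have hub : ∀ v : V, v ≠ 0 → Real.log (β v / α v) ≤ U0 := by
    intro v hv
    have h1 : 0 < β v / α v := div_pos (hβpos v hv) (hαpos v hv)
    have h2 : β v / α v ≤ C1 := (div_le_iff₀ (hαpos v hv)).mpr (hC1b v)
    exact Real.log_le_log h1 h2
  have hlb : ∀ v : V, v ≠ 0 → L0 ≤ Real.log (β v / α v) := by
    intro v hv
    have h1 : 0 < (1 : ℝ) / C2 := by positivity
    have h2 : 1 / C2 ≤ β v / α v := by
      rw [div_le_div_iff₀ hC2 (hαpos v hv)]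
      nlinarith [hC2b v]
    exact Real.log_le_log h1 h2
  -- the extreme spectral values bound all logarithmic ratios
  set n := Module.finrank K V with hn
  have hexV : ∀ (W' : Submodule K V), 1 ≤ Module.finrank K W' → ∃ u ∈ W', u ≠ 0 := by
    intro W' hW'
    by_contra hcon
    push_neg at hcon
    have : W' = ⊥ := by
      rw [Submodule.eq_bot_iff]; exact hcon
    rw [this, finrank_bot] at hW'
    omega
  have hbddBelowV : ∀ (W' : Submodule K V), BddBelow (Set.range
      fun w : {w : V // w ∈ W' ∧ w ≠ 0} => Real.log (β w.1 / α w.1)) := by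
    intro W'
    refine ⟨L0, ?_⟩
    rintro _ ⟨w, rfl⟩
    exact hlb w.1 w.2.2
  have F3a : ∀ v : V, v ≠ 0 → Real.log (β v / α v) ≤ relativeSpectrum K V α β 1 := by
    intro v hv
    have hsp : 1 ≤ Module.finrank K ↥(Submodule.span K {v}) := by
      rw [finrank_span_singleton hv]
    haveI : Nonempty {w : V // w ∈ (Submodule.span K {v} : Submodule K V) ∧ w ≠ 0} :=
      ⟨⟨v, Submodule.mem_span_singleton_self v, hv⟩⟩
    have hIv : Real.log (β v / α v) ≤
        ⨅ w : {w : V // w ∈ (Submodule.span K {v} : Submodule K V) ∧ w ≠ 0},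
          Real.log (β w.1 / α w.1) := by
      apply le_ciInf
      rintro ⟨w, hwmem, hw⟩
      obtain ⟨a, rfl⟩ := Submodule.mem_span_singleton.mp hwmem
      have ha : ‖a‖ ≠ 0 := by
        rw [norm_ne_zero_iff]
        rintro rfl
        rw [zero_smul] at hw
        exact hw rfl
      have heq : β (a • v) / α (a • v) = β v / α v := by
        rw [hα.smul_eq, hβ.smul_eq, mul_div_mul_left _ _ ha]
      exact le_of_eq (by rw [heq])
    have hbddA : BddAbove (Set.range
        fun W' : {W' : Submodule K V // 1 ≤ Module.finrank K W'} =>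
          ⨅ w : {w : V // w ∈ W'.1 ∧ w ≠ 0}, Real.log (β w.1 / α w.1)) := by
      refine ⟨U0, ?_⟩
      rintro _ ⟨⟨W', hW'⟩, rfl⟩
      obtain ⟨u0, hu0W, hu0⟩ := hexV W' hW'
      exact le_trans (ciInf_le (hbddBelowV W') ⟨u0, hu0W, hu0⟩) (hub u0 hu0)
    exact hIv.trans (le_ciSup hbddA ⟨Submodule.span K {v}, hsp⟩)
  have F3b : ∀ v : V, v ≠ 0 → relativeSpectrum K V α β n ≤ Real.log (β v / α v) := by
    intro v hv
    haveI : Nonempty {W' : Submodule K V // n ≤ Module.finrank K W'} :=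
      ⟨⟨⊤, le_of_eq (finrank_top K V).symm⟩⟩
    apply ciSup_le
    rintro ⟨W', hW'⟩
    have hWtop : W' = ⊤ :=
      Submodule.eq_top_of_finrank_eq (le_antisymm (Submodule.finrank_le W') hW')
    have hmem : v ∈ W' := by rw [hWtop]; exact Submodule.mem_top
    exact ciInf_le (hbddBelowV W') ⟨v, hmem, hv⟩
  set Λ := relativeSpectrum K V α β 1 with hΛdef
  set μ := relativeSpectrum K V α β n with hμdef
  have hup : ∀ v : V, β v ≤ Real.exp Λ * α v := by
    intro v
    rcases eq_or_ne v 0 with rfl | hv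
    · rw [(hα.eq_zero_iff 0).mpr rfl, (hβ.eq_zero_iff 0).mpr rfl, mul_zero]
    · have h1 := F3a v hv
      rw [Real.log_le_iff_le_exp (div_pos (hβpos v hv) (hαpos v hv))] at h1
      rw [div_le_iff₀ (hαpos v hv)] at h1
      linarith [h1]
  have hlo : ∀ v : V, Real.exp μ * α v ≤ β v := by
    intro v
    rcases eq_or_ne v 0 with rfl | hv
    · rw [(hα.eq_zero_iff 0).mpr rfl, (hβ.eq_zero_iff 0).mpr rfl, mul_zero]
    · have h1 := F3b v hv
      rw [Real.le_log_iff_exp_le (div_pos (hβpos v hv) (hαpos v hv))] at h1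
      rw [le_div_iff₀ (hαpos v hv)] at h1
      linarith [h1]
  -- bounds for the quotient norms
  have hqbound : ∀ x : V ⧸ W, x ≠ 0 →
      μ ≤ Real.log (quotientNorm K W β x / quotientNorm K W α x) ∧
      Real.log (quotientNorm K W β x / quotientNorm K W α x) ≤ Λ := by
    intro x hx
    obtain ⟨y0, hy0⟩ := Submodule.Quotient.mk_surjective W x
    haveI : Nonempty {y : V // (Submodule.Quotient.mk y : V ⧸ W) = x} := ⟨⟨y0, hy0⟩⟩
    have hbddα : BddBelow (Set.range
        fun y : {y : V // (Submodule.Quotient.mk y : V ⧸ W) = x} => α y.1) := by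
      refine ⟨0, ?_⟩; rintro _ ⟨y, rfl⟩; exact hα.nonneg y.1
    have hbddβ : BddBelow (Set.range
        fun y : {y : V // (Submodule.Quotient.mk y : V ⧸ W) = x} => β y.1) := by
      refine ⟨0, ?_⟩; rintro _ ⟨y, rfl⟩; exact hβ.nonneg y.1
    have hqα : 0 < quotientNorm K W α x := quotientNorm_pos W hα hx
    have hqle : quotientNorm K W β x ≤ Real.exp Λ * quotientNorm K W α x := by
      rw [← div_le_iff₀' (Real.exp_pos Λ)]
      refine le_ciInf fun y => ?_
      rw [div_le_iff₀' (Real.exp_pos Λ)]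
      exact le_trans
        (show quotientNorm K W β x ≤ β y.1 from ciInf_le hbddβ y) (hup y.1)
    have hqge : Real.exp μ * quotientNorm K W α x ≤ quotientNorm K W β x := by
      refine le_ciInf fun y => ?_
      calc Real.exp μ * quotientNorm K W α x
          ≤ Real.exp μ * α y.1 :=
            mul_le_mul_of_nonneg_left
              (show quotientNorm K W α x ≤ α y.1 from ciInf_le hbddα y)
              (Real.exp_nonneg μ)
        _ ≤ β y.1 := hlo y.1
    have hqβ : 0 < quotientNorm K W β x :=
      lt_of_lt_of_le (mul_pos (Real.exp_pos μ) hqα) hqge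
    constructor
    · rw [Real.le_log_iff_exp_le (div_pos hqβ hqα), le_div_iff₀ hqα]
      linarith [hqge]
    · rw [Real.log_le_iff_le_exp (div_pos hqβ hqα), div_le_iff₀ hqα]
      linarith [hqle]
  constructor
  · refine btDist_le_of_range α β _ _ (Submodule.finrank_le W) (fun h => ?_) ?_
    · exact lt_of_lt_of_le h (Submodule.finrank_le W)
    · intro u hu
      have hvu : (u : V) ≠ 0 := fun h => hu ((Submodule.coe_eq_zero).mp h)
      exact ⟨F3b u hvu, F3a u hvu⟩
  · refine btDist_le_of_range α β _ _ (Submodule.finrank_quotient_le W) (fun h => ?_) ?_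
    · exact lt_of_lt_of_le h (Submodule.finrank_quotient_le W)
    · intro x hx
      exact hqbound x hx
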